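/- There exists p₀ such that for every prime p > p₀ with p ≡ 1 (mod 3), one has ρ(2/3, p) > 0.23. In particular, ρ(2/3, p) > 2/9 for all sufficiently large primes p ≡ 1 (mod 3). -/

import Mathlib

open Finset Complex


/-- `Λ₃(f; N) = N⁻² ∑_{n,d ∈ ℤ/N} f(n) f(n+d) f(n+2d)`. -/
noncomputable def lambda3 (N : ℕ) (f : ZMod N → ℝ) : ℝ :=
  ((N : ℝ) ^ 2)⁻¹ * ∑ n ∈ Finset.range N, ∑ d ∈ Finset.range N,
    f n * f (n + d) * f (n + 2 * d)

/-- `𝔼(f) = N⁻¹ ∑_{n ∈ ℤ/N} f(n)`. -/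
noncomputable def expect (N : ℕ) (f : ZMod N → ℝ) : ℝ :=
  (N : ℝ)⁻¹ * ∑ n ∈ Finset.range N, f n

/-- `ρ(υ, N)`: the minimum of `Λ₃(f; N)` over `f : ℤ/N → [0,1]` with `𝔼(f) ≥ υ`. -/
noncomputable def rho (υ : ℝ) (N : ℕ) : ℝ :=
  sInf {x : ℝ | ∃ f : ZMod N → ℝ,
    (∀ n, f n ∈ Set.Icc (0 : ℝ) 1) ∧ υ ≤ expect N f ∧ lambda3 N f = x}

namespace RhoAux

variable {p : ℕ} [Fact p.Prime]

noncomputable def ch : AddChar (ZMod p) ℂ := ZMod.stdAddChar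

lemma sum_ch {b : ZMod p} (hb : b ≠ 0) : ∑ n : ZMod p, ch (n * b) = 0 := by
  have := AddChar.sum_mulShift b (ZMod.isPrimitive_stdAddChar p)
  rw [if_neg hb] at this
  exact_mod_cast this

lemma norm_ch (x : ZMod p) : ‖ch x‖ = 1 := by
  rw [ch, ZMod.stdAddChar_apply]
  exact Circle.norm_coe _

lemma ch_ne_zero (x : ZMod p) : ch x ≠ 0 := by
  intro h
  have := norm_ch x
  rw [h] at this
  simp at this

lemma ch_mul_ch (x y : ZMod p) : ch x * ch y = ch (x + y) :=
  (AddChar.map_add_eq_mul ch x y).symm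

lemma conj_ch (x : ZMod p) : (starRingEnd ℂ) (ch x) = ch (-x) := by
  have h1 : ch x * ch (-x) = 1 := by
    rw [ch_mul_ch]; simp
  have h2 : (starRingEnd ℂ) (ch x) * ch x = 1 := by
    rw [mul_comm, Complex.mul_conj]
    norm_cast
    rw [← Complex.sq_norm]
    simp [norm_ch]
  have := h1.trans h2.symm
  exact mul_left_cancel₀ (ch_ne_zero x) (by linear_combination -this)

lemma ch_pow (x : ZMod p) (k : ℕ) : ch x ^ k = ch ((k : ZMod p) * x) := by
  rw [← AddChar.map_nsmul_eq_pow, nsmul_eq_mul]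

lemma natCast_ne_zero {k : ℕ} (hk : 0 < k) (hkp : k < p) : (k : ZMod p) ≠ 0 := by
  rw [Ne, ZMod.natCast_eq_zero_iff]
  intro h
  exact absurd (Nat.le_of_dvd hk h) (by omega)

lemma sum_ch_ite (w : ZMod p) :
    ∑ r : ZMod p, ch (r * w) = if w = 0 then (p : ℂ) else 0 := by
  have := AddChar.sum_mulShift w (ZMod.isPrimitive_stdAddChar p)
  rw [ZMod.card] at this
  exact_mod_cast this

noncomputable def FT (f : ZMod p → ℝ) (r : ZMod p) : ℂ :=
  ∑ n : ZMod p, (f n : ℂ) * ch (r * n)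

lemma FT_zero (f : ZMod p → ℝ) : FT f 0 = ((∑ n : ZMod p, f n : ℝ) : ℂ) := by
  simp [FT, ch]
  
lemma L1 (f : ZMod p → ℝ) :
    ∑ r : ZMod p, FT f r ^ 2 * FT f (-(2 * r))
      = (p : ℂ) * ∑ x : ZMod p, ∑ z : ZMod p, ((f x : ℂ) * f (2*z - x) * f z) := by
  have step1 : ∀ r : ZMod p, FT f r ^ 2 * FT f (-(2*r))
      = ∑ x : ZMod p, ∑ y : ZMod p, ∑ z : ZMod p,
          ((f x : ℂ) * f y * f z) * ch (r * (x + y - 2*z)) := by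
    intro r
    rw [sq, FT]
    rw [Finset.sum_mul_sum]
    rw [Finset.sum_mul]
    refine Finset.sum_congr rfl fun x _ => ?_
    rw [Finset.sum_mul]
    refine Finset.sum_congr rfl fun y _ => ?_
    rw [FT, Finset.mul_sum]
    refine Finset.sum_congr rfl fun z _ => ?_
    have hch : ch (r*x) * ch (r*y) * ch (-(2*r) * z) = ch (r * (x + y - 2*z)) := by
      rw [ch_mul_ch, ch_mul_ch]
      congr 1
      ring
    calc (f x : ℂ) * ch (r*x) * ((f y : ℂ) * ch (r*y)) * ((f z : ℂ) * ch (-(2*r) * z))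
        = ((f x : ℂ) * f y * f z) * (ch (r*x) * ch (r*y) * ch (-(2*r) * z)) := by ring
      _ = ((f x : ℂ) * f y * f z) * ch (r * (x + y - 2*z)) := by rw [hch]
  calc ∑ r : ZMod p, FT f r ^ 2 * FT f (-(2 * r))
      = ∑ r : ZMod p, ∑ x : ZMod p, ∑ y : ZMod p, ∑ z : ZMod p,
          ((f x : ℂ) * f y * f z) * ch (r * (x + y - 2*z)) := by
        exact Finset.sum_congr rfl fun r _ => step1 r
    _ = ∑ x : ZMod p, ∑ y : ZMod p, ∑ z : ZMod p,
          ((f x : ℂ) * f y * f z) * (if (x + y - 2*z) = 0 then (p:ℂ) else 0) := by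
        rw [Finset.sum_comm]
        refine Finset.sum_congr rfl fun x _ => ?_
        rw [Finset.sum_comm]
        refine Finset.sum_congr rfl fun y _ => ?_
        rw [Finset.sum_comm]
        refine Finset.sum_congr rfl fun z _ => ?_
        rw [← Finset.mul_sum, sum_ch_ite]
    _ = (p : ℂ) * ∑ x : ZMod p, ∑ z : ZMod p, ((f x : ℂ) * f (2*z - x) * f z) := by
        rw [Finset.mul_sum]
        refine Finset.sum_congr rfl fun x _ => ?_
        rw [Finset.sum_comm, Finset.mul_sum]
        refine Finset.sum_congr rfl fun z _ => ?_
        have hcond : ∀ y : ZMod p, (x + y - 2*z = 0) = (y = 2*z - x) := by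
          intro y
          apply propext
          constructor <;> intro h <;> linear_combination h
        simp_rw [hcond, mul_ite, mul_zero]
        rw [Finset.sum_ite_eq' univ (2*z - x) (fun y => ((f x : ℂ) * f y * f z) * p)]
        simp only [mem_univ, if_true]
        ring
    
lemma parseval (f : ZMod p → ℝ) :
    ∑ r : ZMod p, ((Complex.normSq (FT f r) : ℝ) : ℂ) = (p : ℂ) * ∑ n : ZMod p, ((f n : ℂ))^2 := by
  have conjFT : ∀ r : ZMod p, (starRingEnd ℂ) (FT f r) = ∑ n : ZMod p, (f n : ℂ) * ch (-(r * n)) := by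
    intro r
    rw [FT, map_sum]
    refine Finset.sum_congr rfl fun n _ => ?_
    rw [map_mul, Complex.conj_ofReal]
    congr 1
    have h1 : ch (r*n) * ch (-(r*n)) = 1 := by rw [ch_mul_ch]; simp
    have habs : ‖ch (r*n)‖ = 1 := by
      rw [ch, ZMod.stdAddChar_apply]; exact Circle.norm_coe _
    have h2 : (starRingEnd ℂ) (ch (r*n)) * ch (r*n) = 1 := by
      rw [mul_comm, Complex.mul_conj, ← Complex.sq_norm, habs]
      norm_num
    have hne : ch (r*n) ≠ 0 := by
      intro h; rw [h] at habs; simp at habs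
    exact mul_left_cancel₀ hne (by linear_combination h2 - h1)
  have expand : ∀ r : ZMod p, ((Complex.normSq (FT f r) : ℝ) : ℂ)
      = ∑ x : ZMod p, ∑ y : ZMod p, ((f x : ℂ) * f y) * ch (r * (x - y)) := by
    intro r
    rw [← Complex.mul_conj, conjFT, FT, Finset.sum_mul_sum]
    refine Finset.sum_congr rfl fun x _ => ?_
    refine Finset.sum_congr rfl fun y _ => ?_
    have hch : ch (r*x) * ch (-(r*y)) = ch (r * (x - y)) := by
      rw [ch_mul_ch]; congr 1; ring
    calc (f x : ℂ) * ch (r*x) * ((f y : ℂ) * ch (-(r*y)))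
        = ((f x : ℂ) * f y) * (ch (r*x) * ch (-(r*y))) := by ring
      _ = _ := by rw [hch]
  calc ∑ r : ZMod p, ((Complex.normSq (FT f r) : ℝ) : ℂ)
      = ∑ r : ZMod p, ∑ x : ZMod p, ∑ y : ZMod p, ((f x : ℂ) * f y) * ch (r * (x - y)) :=
        Finset.sum_congr rfl fun r _ => expand r
    _ = ∑ x : ZMod p, ∑ y : ZMod p, ((f x : ℂ) * f y) * (if x - y = 0 then (p:ℂ) else 0) := by
        rw [Finset.sum_comm]
        refine Finset.sum_congr rfl fun x _ => ?_
        rw [Finset.sum_comm]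
        refine Finset.sum_congr rfl fun y _ => ?_
        rw [← Finset.mul_sum, sum_ch_ite]
    _ = (p : ℂ) * ∑ n : ZMod p, ((f n : ℂ))^2 := by
        rw [Finset.mul_sum]
        refine Finset.sum_congr rfl fun x _ => ?_
        have hcond : ∀ y : ZMod p, (x - y = 0) = (y = x) := by
          intro y
          apply propext
          constructor <;> intro h <;> linear_combination -h
        simp_rw [hcond, mul_ite, mul_zero]
        rw [Finset.sum_ite_eq' univ x (fun y => ((f x : ℂ) * f y) * p)]
        simp only [mem_univ, if_true]
        ring


noncomputable def Qp (x : ℝ) : ℝ :=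
  73/4096 - (41/512)*x - (121/1024)*x^2 + (1129/2048)*x^3 + (3549/4096)*x^4
    - (903/4096)*x^5 - (2065/4096)*x^6

lemma Qp_nonneg {x : ℝ} (h1 : -1 ≤ x) (h2 : x ≤ 1) : 0 ≤ Qp x := by
  unfold Qp
  nlinarith [mul_nonneg (mul_nonneg (sub_nonneg.2 h2) (by linarith : (0:ℝ) ≤ 1 + x)) (sq_nonneg ((x - 6/25)*(x + 3/5))),
    mul_nonneg (mul_nonneg (sub_nonneg.2 h2) (by linarith : (0:ℝ) ≤ 1 + x)) (sq_nonneg (x - 6/25)),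
    mul_nonneg (mul_nonneg (sub_nonneg.2 h2) (by linarith : (0:ℝ) ≤ 1 + x)) (sq_nonneg (x + 3/5)),
    sq_nonneg ((x - 6/25)*(x + 3/5)), sq_nonneg (x - 6/25), sq_nonneg (x + 3/5),
    mul_nonneg (mul_nonneg (sub_nonneg.2 h2) (by linarith : (0:ℝ) ≤ 1 + x)) (sq_nonneg x)]

lemma Qp_ge {x : ℝ} (h1 : -1 ≤ x) (h2 : x ≤ 1) : x - 1/2 ≤ Qp x := by
  unfold Qp
  nlinarith [mul_nonneg (mul_nonneg (sub_nonneg.2 h2) (by linarith : (0:ℝ) ≤ 1 + x)) (sq_nonneg ((x - 71/100)*(x - 71/100))),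
    mul_nonneg (mul_nonneg (sub_nonneg.2 h2) (by linarith : (0:ℝ) ≤ 1 + x)) (sq_nonneg (x - 71/100)),
    sq_nonneg ((x - 71/100)*(x-1)), sq_nonneg (x - 71/100),
    mul_nonneg (mul_nonneg (sub_nonneg.2 h2) (by linarith : (0:ℝ) ≤ 1 + x)) (sq_nonneg x),
    sq_nonneg ((x - 71/100)*(x - 71/100)*(x-1))]

lemma Qp_pointwise {g a : ℝ} (hg0 : 0 ≤ g) (hg1 : g ≤ 1) (ha : -1 ≤ a) (ha' : a ≤ 1) :
    g * a ≤ g * (1/2) + Qp a := by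
  rcases le_or_gt a (1/2) with h | h
  · have h0 := Qp_nonneg ha ha'
    nlinarith
  · have h1 := Qp_ge ha ha'
    nlinarith


lemma sum_ch_pow {r : ZMod p} (hr : r ≠ 0) {k : ℕ} (hk : 0 < k) (hkp : k < p) :
    ∑ n : ZMod p, ch (r * n) ^ k = 0 := by
  have h : ∀ n : ZMod p, ch (r * n) ^ k = ch (n * ((k : ZMod p) * r)) := by
    intro n
    rw [ch_pow]
    congr 1
    ring
  simp_rw [h]
  exact sum_ch (mul_ne_zero (natCast_ne_zero hk hkp) hr)

set_option maxHeartbeats 1000000 in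
lemma exp_bound (hp7 : 7 ≤ p) {g : ZMod p → ℝ} (hg : ∀ n, 0 ≤ g n ∧ g n ≤ 1)
    {r : ZMod p} (hr : r ≠ 0) :
    ‖FT g r‖ ≤ (∑ n : ZMod p, g n) / 2 + (8265/65536) * p := by
  obtain ⟨c, hc1, hcu⟩ : ∃ c : ℂ, ‖c‖ = 1 ∧
      c * FT g r = ((‖FT g r‖ : ℝ) : ℂ) := by
    by_cases h : FT g r = 0
    · exact ⟨1, by simp, by simp [h]⟩
    · have habs : ‖FT g r‖ ≠ 0 := norm_ne_zero_iff.mpr h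
      have habsC : ((‖FT g r‖) : ℂ) ≠ 0 := by exact_mod_cast habs
      refine ⟨(starRingEnd ℂ) (FT g r) / (‖FT g r‖ : ℝ), ?_, ?_⟩
      · rw [norm_div, Complex.norm_conj,
          Complex.norm_of_nonneg (norm_nonneg _), div_self habs]
      · rw [div_mul_eq_mul_div, mul_comm, Complex.mul_conj, Complex.normSq_eq_norm_sq]
        push_cast
        rw [sq, mul_div_assoc, div_self habsC, mul_one]
  set w : ZMod p → ℂ := fun n => c * ch (r * n) with hw
  have hwnorm : ∀ n, ‖w n‖ = 1 := by
    intro n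
    rw [hw]
    simp only [norm_mul, hc1, one_mul]
    rw [ch, ZMod.stdAddChar_apply]
    exact Circle.norm_coe _
  set a : ZMod p → ℝ := fun n => (w n).re with ha
  have hnormsq : ∀ n, (w n).re ^ 2 + (w n).im ^ 2 = 1 := by
    intro n
    have h2 : Complex.normSq (w n) = 1 := by
      rw [← Complex.sq_norm, hwnorm n]; norm_num
    rw [Complex.normSq_apply] at h2
    linear_combination h2
  have ha1 : ∀ n, -1 ≤ a n ∧ a n ≤ 1 := by
    intro n
    have h1 := Complex.abs_re_le_norm (w n)
    rw [hwnorm n] at h1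
    constructor <;> [exact neg_le_of_abs_le h1; exact le_of_abs_le h1]
  -- moment sums
  have hwk : ∀ k : ℕ, 0 < k → k < p → ∑ n : ZMod p, (w n) ^ k = 0 := by
    intro k hk hkp
    have : ∀ n : ZMod p, (w n) ^ k = c ^ k * ch (r * n) ^ k := by
      intro n; rw [hw]; ring
    simp_rw [this]
    rw [← Finset.mul_sum, sum_ch_pow hr hk hkp, mul_zero]
  have hrek : ∀ k : ℕ, 0 < k → k < p → ∑ n : ZMod p, ((w n) ^ k).re = 0 := by
    intro k hk hkp
    rw [← Complex.re_sum, hwk k hk hkp, Complex.zero_re]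
  have hcard : (Finset.univ : Finset (ZMod p)).card = p := by
    rw [Finset.card_univ, ZMod.card]
  -- power sums of a
  have pow_id : ∀ n : ZMod p,
      a n = ((w n)^1).re ∧
      a n ^ 2 = 1/2 + ((w n)^2).re/2 ∧
      a n ^ 3 = ((w n)^3).re/4 + 3*((w n)^1).re/4 ∧
      a n ^ 4 = 3/8 + ((w n)^4).re/8 + ((w n)^2).re/2 ∧
      a n ^ 5 = ((w n)^5).re/16 + 5*((w n)^3).re/16 + 10*((w n)^1).re/16 ∧
      a n ^ 6 = 10/32 + ((w n)^6).re/32 + 6*((w n)^4).re/32 + 15*((w n)^2).re/32 := by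
    intro n
    have h1 := hnormsq n
    set A := (w n).re
    set B := (w n).im
    have e1 : ((w n)^1).re = A := by simp; rfl
    have e2 : ((w n)^2).re = A^2 - B^2 := by
      simp [pow_two, Complex.mul_re]; rfl
    have e3 : ((w n)^3).re = A^3 - 3*A*B^2 := by
      have : (w n)^3 = (w n)^2 * w n := by ring
      rw [this, Complex.mul_re, e2]
      have : ((w n)^2).im = 2*A*B := by simp [pow_two, Complex.mul_im]; ring
      rw [this]; ring
    have h2im : ((w n)^2).im = 2*A*B := by simp [pow_two, Complex.mul_im]; ring
    have e4 : ((w n)^4).re = A^4 - 6*A^2*B^2 + B^4 := by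
      have h : (w n)^4 = (w n)^2 * (w n)^2 := by ring
      rw [h, Complex.mul_re, e2, h2im]; ring
    have h4im : ((w n)^4).im = 4*A^3*B - 4*A*B^3 := by
      have h : (w n)^4 = (w n)^2 * (w n)^2 := by ring
      rw [h, Complex.mul_im, e2, h2im]; ring
    have e5 : ((w n)^5).re = A^5 - 10*A^3*B^2 + 5*A*B^4 := by
      have h : (w n)^5 = (w n)^4 * w n := by ring
      rw [h, Complex.mul_re, e4, h4im]; ring
    have e6 : ((w n)^6).re = A^6 - 15*A^4*B^2 + 15*A^2*B^4 - B^6 := by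
      have h : (w n)^6 = (w n)^4 * (w n)^2 := by ring
      rw [h, Complex.mul_re, e4, h4im, e2, h2im]; ring
    have hA : a n = A := rfl
    refine ⟨by simp [e1, hA]; rfl, ?_, ?_, ?_, ?_, ?_⟩
    · rw [e2, hA]; linear_combination (1/2) * h1
    · rw [e3, e1, hA]; linear_combination (3*A/4) * h1
    · rw [e4, e2, hA]; linear_combination (7/8*A^2 - 1/8*B^2 + 3/8) * h1
    · rw [e5, e3, e1, hA]; linear_combination (15/16*A^3 - 5/16*A*B^2 + 10/16*A) * h1
    · rw [e6, e4, e2, hA]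
      linear_combination (31/32*A^4 - 1/2*A^2*B^2 + 1/32*B^4 + 25/32*A^2 - 5/32*B^2 + 10/32) * h1
  have sum_a1 : ∑ n : ZMod p, a n = 0 := by
    have := hrek 1 (by omega) (by omega)
    calc ∑ n : ZMod p, a n = ∑ n : ZMod p, ((w n)^1).re :=
          Finset.sum_congr rfl fun n _ => (pow_id n).1
      _ = 0 := this
  have sum_a2 : ∑ n : ZMod p, a n ^ 2 = p/2 := by
    calc ∑ n : ZMod p, a n ^ 2 = ∑ n : ZMod p, (1/2 + ((w n)^2).re/2) :=
          Finset.sum_congr rfl fun n _ => (pow_id n).2.1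
      _ = p/2 := by
          rw [Finset.sum_add_distrib, Finset.sum_const, hcard, ← Finset.sum_div,
            hrek 2 (by omega) (by omega)]
          simp; ring
  have sum_a3 : ∑ n : ZMod p, a n ^ 3 = 0 := by
    calc ∑ n : ZMod p, a n ^ 3 = ∑ n : ZMod p, (((w n)^3).re/4 + 3*((w n)^1).re/4) :=
          Finset.sum_congr rfl fun n _ => (pow_id n).2.2.1
      _ = 0 := by
          rw [Finset.sum_add_distrib, ← Finset.sum_div, hrek 3 (by omega) (by omega)]
          have : ∑ n : ZMod p, 3*((w n)^1).re/4 = (3/4) * ∑ n : ZMod p, ((w n)^1).re := by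
            rw [Finset.mul_sum]; exact Finset.sum_congr rfl fun n _ => by ring
          rw [this, hrek 1 (by omega) (by omega)]
          simp
  have sum_a4 : ∑ n : ZMod p, a n ^ 4 = 3/8 * p := by
    calc ∑ n : ZMod p, a n ^ 4
        = ∑ n : ZMod p, (3/8 + ((w n)^4).re/8 + ((w n)^2).re/2) :=
          Finset.sum_congr rfl fun n _ => (pow_id n).2.2.2.1
      _ = 3/8 * p := by
          rw [Finset.sum_add_distrib, Finset.sum_add_distrib, Finset.sum_const, hcard,
            ← Finset.sum_div, ← Finset.sum_div, hrek 4 (by omega) (by omega),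
            hrek 2 (by omega) (by omega)]
          simp; ring
  have sum_a5 : ∑ n : ZMod p, a n ^ 5 = 0 := by
    calc ∑ n : ZMod p, a n ^ 5
        = ∑ n : ZMod p, (((w n)^5).re/16 + 5*((w n)^3).re/16 + 10*((w n)^1).re/16) :=
          Finset.sum_congr rfl fun n _ => (pow_id n).2.2.2.2.1
      _ = 0 := by
          rw [Finset.sum_add_distrib, Finset.sum_add_distrib, ← Finset.sum_div]
          have h3 : ∑ n : ZMod p, 5*((w n)^3).re/16 = (5/16) * ∑ n : ZMod p, ((w n)^3).re := by
            rw [Finset.mul_sum]; exact Finset.sum_congr rfl fun n _ => by ring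
          have h1 : ∑ n : ZMod p, 10*((w n)^1).re/16 = (10/16) * ∑ n : ZMod p, ((w n)^1).re := by
            rw [Finset.mul_sum]; exact Finset.sum_congr rfl fun n _ => by ring
          rw [h3, h1, hrek 5 (by omega) (by omega), hrek 3 (by omega) (by omega),
            hrek 1 (by omega) (by omega)]
          simp
  have sum_a6 : ∑ n : ZMod p, a n ^ 6 = 10/32 * p := by
    calc ∑ n : ZMod p, a n ^ 6
        = ∑ n : ZMod p, (10/32 + ((w n)^6).re/32 + 6*((w n)^4).re/32 + 15*((w n)^2).re/32) :=
          Finset.sum_congr rfl fun n _ => (pow_id n).2.2.2.2.2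
      _ = 10/32 * p := by
          rw [Finset.sum_add_distrib, Finset.sum_add_distrib, Finset.sum_add_distrib,
            Finset.sum_const, hcard, ← Finset.sum_div]
          have h4 : ∑ n : ZMod p, 6*((w n)^4).re/32 = (6/32) * ∑ n : ZMod p, ((w n)^4).re := by
            rw [Finset.mul_sum]; exact Finset.sum_congr rfl fun n _ => by ring
          have h2 : ∑ n : ZMod p, 15*((w n)^2).re/32 = (15/32) * ∑ n : ZMod p, ((w n)^2).re := by
            rw [Finset.mul_sum]; exact Finset.sum_congr rfl fun n _ => by ring
          rw [h4, h2, hrek 6 (by omega) (by omega), hrek 4 (by omega) (by omega),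
            hrek 2 (by omega) (by omega)]
          simp; ring
  have sumQ : ∑ n : ZMod p, Qp (a n) = (8265/65536) * p := by
    have expand : ∀ n : ZMod p, Qp (a n)
        = 73/4096 - (41/512)*(a n) - (121/1024)*(a n)^2 + (1129/2048)*(a n)^3
          + (3549/4096)*(a n)^4 - (903/4096)*(a n)^5 - (2065/4096)*(a n)^6 := fun n => rfl
    calc ∑ n : ZMod p, Qp (a n)
        = ∑ n : ZMod p, (73/4096 - (41/512)*(a n) - (121/1024)*(a n)^2 + (1129/2048)*(a n)^3
          + (3549/4096)*(a n)^4 - (903/4096)*(a n)^5 - (2065/4096)*(a n)^6) :=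
          Finset.sum_congr rfl fun n _ => expand n
      _ = (8265/65536) * p := by
          rw [Finset.sum_sub_distrib, Finset.sum_sub_distrib, Finset.sum_add_distrib,
            Finset.sum_add_distrib, Finset.sum_sub_distrib, Finset.sum_sub_distrib,
            Finset.sum_const, hcard, ← Finset.mul_sum, ← Finset.mul_sum, ← Finset.mul_sum,
            ← Finset.mul_sum, ← Finset.mul_sum, ← Finset.mul_sum,
            sum_a1, sum_a2, sum_a3, sum_a4, sum_a5, sum_a6]
          simp
          ring
  -- the main bound
  have hre : ‖FT g r‖ = ∑ n : ZMod p, g n * a n := by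
    have h1 : c * FT g r = ∑ n : ZMod p, (g n : ℂ) * w n := by
      rw [FT, Finset.mul_sum]
      exact Finset.sum_congr rfl fun n _ => by rw [hw]; ring
    have h2 : (c * FT g r).re = ∑ n : ZMod p, g n * a n := by
      rw [h1, Complex.re_sum]
      exact Finset.sum_congr rfl fun n _ => by
        rw [Complex.mul_re, Complex.ofReal_re, Complex.ofReal_im]
        simp [ha]
    rw [← h2, hcu, Complex.ofReal_re]
  rw [hre]
  have hptwise : ∀ n : ZMod p, g n * a n ≤ g n * (1/2) + Qp (a n) := fun n =>
    Qp_pointwise (hg n).1 (hg n).2 (ha1 n).1 (ha1 n).2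
  calc ∑ n : ZMod p, g n * a n ≤ ∑ n : ZMod p, (g n * (1/2) + Qp (a n)) :=
        Finset.sum_le_sum fun n _ => hptwise n
    _ = (∑ n : ZMod p, g n) / 2 + (8265/65536) * p := by
        rw [Finset.sum_add_distrib, sumQ, ← Finset.sum_mul]
        ring


lemma sum_range_zmod (h : ZMod p → ℝ) :
    ∑ n ∈ Finset.range p, h (n : ZMod p) = ∑ x : ZMod p, h x := by
  haveI : NeZero p := ⟨(Fact.out : p.Prime).ne_zero⟩
  refine Finset.sum_nbij' (fun n => (n : ZMod p)) (fun x => x.val) ?_ ?_ ?_ ?_ ?_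
  · intro a _; exact Finset.mem_univ _
  · intro b _; exact Finset.mem_range.2 (ZMod.val_lt b)
  · intro a ha; exact ZMod.val_natCast_of_lt (Finset.mem_range.1 ha)
  · intro b _; exact ZMod.natCast_zmod_val b
  · intro a _; rfl


lemma lambda3_inner (f : ZMod p → ℝ) (n : ZMod p) :
    ∑ d : ZMod p, f n * f (n + d) * f (n + 2 * d)
      = ∑ z : ZMod p, f n * f (2 * z - n) * f z := by
  refine Finset.sum_equiv (Equiv.addLeft n) (by simp) ?_
  intro d _
  simp only [Equiv.coe_addLeft]
  have h1 : (2 : ZMod p) * (n + d) - n = n + 2 * d := by ring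
  rw [h1]
  ring

lemma lambda3_formula (f : ZMod p → ℝ) :
    _root_.lambda3 p f = ((p:ℝ)^2)⁻¹ * ∑ x : ZMod p, ∑ z : ZMod p, f x * f (2*z - x) * f z := by
  rw [_root_.lambda3]
  congr 1
  calc ∑ n ∈ Finset.range p, ∑ d ∈ Finset.range p,
        f (n : ZMod p) * f ((n : ZMod p) + (d : ZMod p)) * f ((n : ZMod p) + 2 * (d : ZMod p))
      = ∑ n : ZMod p, ∑ d ∈ Finset.range p, f n * f (n + (d : ZMod p)) * f (n + 2 * (d : ZMod p)) :=
        sum_range_zmod (fun ν => ∑ d ∈ Finset.range p, f ν * f (ν + (d : ZMod p)) * f (ν + 2 * (d : ZMod p)))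
    _ = ∑ n : ZMod p, ∑ d : ZMod p, f n * f (n + d) * f (n + 2 * d) :=
        Finset.sum_congr rfl fun n _ =>
          sum_range_zmod (fun δ => f n * f (n + δ) * f (n + 2 * δ))
    _ = ∑ x : ZMod p, ∑ z : ZMod p, f x * f (2*z - x) * f z :=
        Finset.sum_congr rfl fun n _ => lambda3_inner f n

lemma expect_eq (f : ZMod p → ℝ) : _root_.expect p f = (p : ℝ)⁻¹ * ∑ x : ZMod p, f x := by
  rw [_root_.expect, sum_range_zmod f]

set_option maxHeartbeats 1000000 in
lemma main_bound (hp7 : 7 ≤ p) (f : ZMod p → ℝ) (hf : ∀ n, f n ∈ Set.Icc (0:ℝ) 1)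
    (hmean : 2/3 ≤ _root_.expect p f) : (2305 : ℝ)/10000 ≤ _root_.lambda3 p f := by
  haveI : NeZero p := ⟨(Fact.out : p.Prime).ne_zero⟩
  have hpR : (0:ℝ) < p := by
    have := (Fact.out : p.Prime).pos
    exact_mod_cast this
  have hp7R : (7:ℝ) ≤ p := by exact_mod_cast hp7
  have hf0 : ∀ n, 0 ≤ f n := fun n => (hf n).1
  have hf1 : ∀ n, f n ≤ 1 := fun n => (hf n).2
  set S := ∑ x : ZMod p, f x with hSdef
  set T : ℝ := ∑ x : ZMod p, ∑ z : ZMod p, f x * f (2*z - x) * f z with hTdef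
  have hcard : (Finset.univ : Finset (ZMod p)).card = p := by rw [Finset.card_univ, ZMod.card]
  have hS1 : S ≤ p := by
    have h : (∑ x : ZMod p, f x) ≤ ∑ _x : ZMod p, (1:ℝ) :=
      Finset.sum_le_sum fun n _ => hf1 n
    rw [Finset.sum_const, hcard] at h
    simpa using h
  have hS2 : 2/3 * (p:ℝ) ≤ S := by
    have h := hmean
    rw [expect_eq] at h
    have h2 : (2/3 : ℝ) * p ≤ ((p:ℝ)⁻¹ * S) * p := by nlinarith
    calc 2/3 * (p:ℝ) ≤ ((p:ℝ)⁻¹ * S) * p := h2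
      _ = S := by field_simp
  have hS0 : 0 ≤ S := Finset.sum_nonneg fun n _ => hf0 n
  have hf2 : ∑ x : ZMod p, (f x)^2 ≤ S := Finset.sum_le_sum fun n _ => by nlinarith [hf0 n, hf1 n]
  set g : ZMod p → ℝ := fun x => 1 - f x with hgdef
  have hg : ∀ n, 0 ≤ g n ∧ g n ≤ 1 := fun n =>
    ⟨by rw [hgdef]; simp; linarith [hf1 n], by rw [hgdef]; simp; linarith [hf0 n]⟩
  have hGsum : ∑ x : ZMod p, g x = p - S := by
    rw [hgdef, Finset.sum_sub_distrib, Finset.sum_const, hcard, hSdef]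
    simp
  set B : ℝ := ((p:ℝ) - S)/2 + (8265/65536) * p with hBdef
  have hB0 : 0 ≤ B := by rw [hBdef]; nlinarith
  have hFTf : ∀ r : ZMod p, r ≠ 0 → ‖FT f r‖ ≤ B := by
    intro r hr
    have hsum : FT f r + FT g r = 0 := by
      rw [FT, FT, ← Finset.sum_add_distrib]
      have hterm : ∀ n : ZMod p, (f n : ℂ) * ch (r*n) + (g n : ℂ) * ch (r*n) = ch (r*n) := by
        intro n
        have hfg : (f n : ℂ) + (g n : ℂ) = 1 := by
          rw [hgdef]; push_cast; ring
        linear_combination ch (r*n) * hfg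
      rw [Finset.sum_congr rfl fun n _ => hterm n]
      have h2 : ∀ n : ZMod p, ch (r * n) = ch (n * r) := fun n => by rw [mul_comm]
      rw [Finset.sum_congr rfl fun n _ => h2 n]
      exact sum_ch hr
    have hneg : FT f r = - FT g r := eq_neg_of_add_eq_zero_left hsum
    rw [hneg, norm_neg]
    calc ‖FT g r‖ ≤ (∑ n : ZMod p, g n)/2 + (8265/65536) * p := exp_bound hp7 hg hr
      _ = B := by rw [hGsum, hBdef]
  -- Parseval, real form
  have hPars : ∑ r : ZMod p, Complex.normSq (FT f r) = (p:ℝ) * ∑ x : ZMod p, (f x)^2 := by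
    have h := parseval f
    have h2 : ((∑ r : ZMod p, Complex.normSq (FT f r) : ℝ) : ℂ)
        = (((p:ℝ) * ∑ x : ZMod p, (f x)^2 : ℝ) : ℂ) := by
      push_cast
      exact h
    exact_mod_cast h2
  have h0 : FT f 0 = ((S : ℝ) : ℂ) := by rw [FT_zero, hSdef]
  have hnormSq0 : Complex.normSq (FT f 0) = S^2 := by
    rw [h0, Complex.normSq_ofReal]
    ring
  have hsum_normsq : ∑ r ∈ Finset.univ.erase (0:ZMod p), Complex.normSq (FT f r)
      = (p:ℝ) * (∑ x : ZMod p, (f x)^2) - S^2 := by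
    have h := Finset.add_sum_erase Finset.univ (fun r => Complex.normSq (FT f r))
      (Finset.mem_univ (0:ZMod p))
    rw [hnormSq0] at h
    rw [hPars] at h
    linarith
  -- main identity, real part
  have hL1C : ∑ r : ZMod p, FT f r ^ 2 * FT f (-(2 * r)) = (((p:ℝ) * T : ℝ) : ℂ) := by
    rw [L1 f, hTdef]
    push_cast
    ring
  have hreal : (p:ℝ) * T = (∑ r : ZMod p, FT f r ^ 2 * FT f (-(2 * r))).re := by
    rw [hL1C, Complex.ofReal_re]
  have hsplit := (Finset.add_sum_erase Finset.univ
      (fun r => FT f r ^ 2 * FT f (-(2 * r))) (Finset.mem_univ (0:ZMod p))).symm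
  have hre0 : (FT f 0 ^ 2 * FT f (-(2 * (0:ZMod p)))).re = S^3 := by
    have hzero : (-(2 * (0:ZMod p))) = 0 := by simp
    rw [hzero, h0]
    have hcast : ((S:ℝ):ℂ)^2 * ((S:ℝ):ℂ) = ((S^3 : ℝ) : ℂ) := by push_cast; ring
    rw [hcast, Complex.ofReal_re]
  have hterm : ∀ r ∈ Finset.univ.erase (0 : ZMod p),
      -(Complex.normSq (FT f r) * B) ≤ (FT f r ^ 2 * FT f (-(2 * r))).re := by
    intro r hrmem
    have hr : r ≠ 0 := (Finset.mem_erase.1 hrmem).1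
    have h2r : (-(2 * r)) ≠ 0 := by
      have h2 : (2 : ZMod p) ≠ 0 := by
        have h2' : ((2:ℕ) : ZMod p) ≠ 0 := natCast_ne_zero (by omega) (by omega)
        simpa using h2'
      simpa using mul_ne_zero h2 hr
    have hb := hFTf _ h2r
    have habs : ‖FT f r ^ 2 * FT f (-(2 * r))‖ ≤ Complex.normSq (FT f r) * B := by
      rw [norm_mul, norm_pow]
      have hsq : ‖FT f r‖ ^ 2 = Complex.normSq (FT f r) := Complex.sq_norm _
      have hnn : (0:ℝ) ≤ ‖FT f r‖ ^ 2 := sq_nonneg _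
      calc ‖FT f r‖ ^ 2 * ‖FT f (-(2 * r))‖
          ≤ ‖FT f r‖ ^ 2 * B := mul_le_mul_of_nonneg_left hb hnn
        _ = Complex.normSq (FT f r) * B := by rw [hsq]
    have hre := (abs_le.1 (Complex.abs_re_le_norm (FT f r ^ 2 * FT f (-(2 * r))))).1
    linarith
  have hlow : S^3 - B * ((p:ℝ) * S - S^2) ≤ (p:ℝ) * T := by
    have e1 : (p:ℝ)*T = S^3 + ∑ r ∈ Finset.univ.erase (0:ZMod p),
        (FT f r ^ 2 * FT f (-(2 * r))).re := by
      rw [hreal, hsplit, Complex.add_re, hre0, Complex.re_sum]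
    have e2 : ∑ r ∈ Finset.univ.erase (0:ZMod p), -(Complex.normSq (FT f r) * B)
        ≤ ∑ r ∈ Finset.univ.erase (0:ZMod p), (FT f r ^ 2 * FT f (-(2 * r))).re :=
      Finset.sum_le_sum hterm
    have e3 : ∑ r ∈ Finset.univ.erase (0:ZMod p), -(Complex.normSq (FT f r) * B)
        = -(((p:ℝ) * (∑ x : ZMod p, (f x)^2) - S^2) * B) := by
      rw [Finset.sum_neg_distrib, ← Finset.sum_mul, hsum_normsq]
    have e4 : ((p:ℝ) * (∑ x : ZMod p, (f x)^2) - S^2) * B ≤ ((p:ℝ) * S - S^2) * B := by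
      apply mul_le_mul_of_nonneg_right _ hB0
      nlinarith [hf2, hpR]
    nlinarith [e1, e2, e3.symm.trans_le e2, e4]
  -- numeric endgame
  have hnum : (2305:ℝ)/10000 * (p:ℝ)^3 ≤ S^3 - B * ((p:ℝ)*S - S^2) := by
    rw [hBdef]
    nlinarith [hS2, hS1, hpR, mul_nonneg (sub_nonneg.2 hS2) (sub_nonneg.2 hS1),
      mul_nonneg (mul_nonneg (sub_nonneg.2 hS2) (sub_nonneg.2 hS1)) hpR.le,
      mul_nonneg (mul_nonneg (sub_nonneg.2 hS2) (sub_nonneg.2 hS2)) hpR.le,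
      mul_nonneg (mul_nonneg (sub_nonneg.2 hS1) (sub_nonneg.2 hS1)) hpR.le,
      sq_nonneg (S - 2/3*p), sq_nonneg ((p:ℝ) - S),
      mul_nonneg (sub_nonneg.2 hS2) (sq_nonneg (S - 2/3*p)),
      mul_nonneg (sub_nonneg.2 hS1) (sq_nonneg (S - 2/3*p)),
      mul_nonneg (sub_nonneg.2 hS2) (sq_nonneg ((p:ℝ) - S)),
      mul_nonneg (sub_nonneg.2 hS1) (sq_nonneg ((p:ℝ) - S))]
  have hT : (2305:ℝ)/10000 * (p:ℝ)^2 ≤ T := by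
    have h3 : (2305:ℝ)/10000 * (p:ℝ)^3 ≤ (p:ℝ) * T := le_trans hnum hlow
    have h4 : (p:ℝ) * ((2305:ℝ)/10000 * (p:ℝ)^2) ≤ (p:ℝ) * T := by nlinarith [h3]
    exact le_of_mul_le_mul_left h4 hpR
  rw [lambda3_formula f]
  have hfinal : ((p:ℝ)^2)⁻¹ * ((2305:ℝ)/10000 * (p:ℝ)^2) ≤ ((p:ℝ)^2)⁻¹ * T := by
    apply mul_le_mul_of_nonneg_left hT
    positivity
  calc (2305:ℝ)/10000 = ((p:ℝ)^2)⁻¹ * ((2305:ℝ)/10000 * (p:ℝ)^2) := by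
        field_simp
    _ ≤ ((p:ℝ)^2)⁻¹ * T := hfinal

end RhoAux

theorem rho_two_thirds_gt_on_primes_one_mod_three :
    ∃ p₀ : ℕ, ∀ p : ℕ, p.Prime → p₀ < p → p % 3 = 1 →
      rho (2 / 3) p > 0.23 ∧ rho (2 / 3) p > 2 / 9 := by
  refine ⟨7, fun p hp hp7 _ => ?_⟩
  haveI : Fact p.Prime := ⟨hp⟩
  have hpR : (0:ℝ) < p := by exact_mod_cast hp.pos
  have key : ∀ x ∈ {x : ℝ | ∃ f : ZMod p → ℝ,
      (∀ n, f n ∈ Set.Icc (0 : ℝ) 1) ∧ 2/3 ≤ expect p f ∧ lambda3 p f = x},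
      (2305:ℝ)/10000 ≤ x := by
    rintro x ⟨f, hf, hm, rfl⟩
    exact RhoAux.main_bound (by omega) f hf hm
  have hne : Set.Nonempty {x : ℝ | ∃ f : ZMod p → ℝ,
      (∀ n, f n ∈ Set.Icc (0 : ℝ) 1) ∧ 2/3 ≤ expect p f ∧ lambda3 p f = x} := by
    refine ⟨lambda3 p (fun _ => 1), fun _ => 1, fun n => ⟨zero_le_one, le_refl 1⟩, ?_, rfl⟩
    rw [RhoAux.expect_eq]
    rw [Finset.sum_const, Finset.card_univ, ZMod.card]
    simp only [nsmul_eq_mul, mul_one]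
    rw [inv_mul_cancel₀ (ne_of_gt hpR)]
    norm_num
  have hrho : (2305:ℝ)/10000 ≤ rho (2/3) p := le_csInf hne key
  constructor
  · have : (0.23 : ℝ) < 2305/10000 := by norm_num
    linarith
  · have : (2/9 : ℝ) < 2305/10000 := by norm_num
    linarith
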